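/- Let λ be a Borel measure on ℝ with uncountable support such that ∫ min(x², 1) dλ(x) < ∞, and define f(t) := (∫ sin²(tx) dλ(x))^{1/2}. Let m₁, m₂ be real numbers with m₁ ≠ 0, m₂ ≠ 0 and m₁ + m₂ ≠ 0. Then the three numbers f(|m₁|), f(|m₂|), f(|m₁ + m₂|) satisfy the strict triangle inequalities: f(|m₁ + m₂|) < f(|m₁|) + f(|m₂|), f(|m₁|) < f(|m₂|) + f(|m₁ + m₂|), and f(|m₂|) < f(|m₁|) + f(|m₁ + m₂|); that is, there exists a nondegenerate triangle with these side lengths. -/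

import Mathlib

open Real MeasureTheory

/-- The topological support of a measure on `ℝ`: all points every open
neighbourhood of which has positive measure. -/
def measureSupport (μ : MeasureTheory.Measure ℝ) : Set ℝ :=
  {x : ℝ | ∀ U : Set ℝ, IsOpen U → x ∈ U → μ U ≠ 0}

lemma integrable_sin_sq (lam : Measure ℝ)
    (hint : Integrable (fun x : ℝ => min (x ^ 2) 1) lam) (t : ℝ) :
    Integrable (fun x : ℝ => Real.sin (t * x) ^ 2) lam := by
  refine (hint.const_mul (max (t ^ 2) 1)).mono'
    ((Real.continuous_sin.comp (continuous_const.mul continuous_id)).pow 2).aestronglyMeasurable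
    (Filter.Eventually.of_forall fun x => ?_)
  have hs : Real.sin (t * x) ^ 2 ≤ min ((t * x) ^ 2) 1 := by
    rcases le_total ((t*x)^2) 1 with h | h
    · rw [min_eq_left h]
      exact Real.sin_sq_le_sq
    · rw [min_eq_right h]
      nlinarith [Real.neg_one_le_sin (t*x), Real.sin_le_one (t*x)]
  have hmin : min ((t * x) ^ 2) 1 ≤ max (t ^ 2) 1 * min (x ^ 2) 1 := by
    rcases le_total (x ^ 2) 1 with h | h
    · rw [min_eq_left h]
      calc min ((t*x)^2) 1 ≤ (t*x)^2 := min_le_left _ _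
        _ = t^2 * x^2 := by ring
        _ ≤ max (t^2) 1 * x^2 := by nlinarith [le_max_left (t^2) 1, sq_nonneg x]
    · rw [min_eq_right h]
      calc min ((t*x)^2) 1 ≤ 1 := min_le_right _ _
        _ ≤ max (t^2) 1 * 1 := by nlinarith [le_max_right (t^2) 1]
  rw [Real.norm_eq_abs, abs_of_nonneg (sq_nonneg _)]
  exact hs.trans hmin

/-- Key strict triangle inequality. -/
lemma key_lemma (lam : Measure ℝ)
    (hunc : ¬ (measureSupport lam).Countable)
    (hint : Integrable (fun x : ℝ => min (x ^ 2) 1) lam)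
    (a b c : ℝ) (ha : a ≠ 0) (hb : b ≠ 0) (hc : c = a + b) :
    Real.sqrt (∫ x, Real.sin (c * x) ^ 2 ∂lam)
      < Real.sqrt (∫ x, Real.sin (a * x) ^ 2 ∂lam)
        + Real.sqrt (∫ x, Real.sin (b * x) ^ 2 ∂lam) := by
  set u : ℝ → ℝ := fun x => |Real.sin (a * x)| with hu
  set v : ℝ → ℝ := fun x => |Real.sin (b * x)| with hv
  have hu_cont : Continuous u :=
    (Real.continuous_sin.comp (continuous_const.mul continuous_id)).abs
  have hv_cont : Continuous v :=
    (Real.continuous_sin.comp (continuous_const.mul continuous_id)).abs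
  have Ia : Integrable (fun x => Real.sin (a * x) ^ 2) lam := integrable_sin_sq lam hint a
  have Ib : Integrable (fun x => Real.sin (b * x) ^ 2) lam := integrable_sin_sq lam hint b
  have Ic : Integrable (fun x => Real.sin (c * x) ^ 2) lam := integrable_sin_sq lam hint c
  -- integrability of (u+v)^2 and u*v
  have Iuv : Integrable (fun x => u x * v x) lam := by
    refine (Ia.add Ib).mono' (hu_cont.mul hv_cont).aestronglyMeasurable
      (Filter.Eventually.of_forall fun x => ?_)
    have h1 : |Real.sin (a*x)| * |Real.sin (b*x)| ≤ Real.sin (a*x)^2 + Real.sin (b*x)^2 := by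
      nlinarith [sq_nonneg (|Real.sin (a*x)| - |Real.sin (b*x)|), abs_nonneg (Real.sin (a*x)),
        abs_nonneg (Real.sin (b*x)), sq_abs (Real.sin (a*x)), sq_abs (Real.sin (b*x))]
    rw [Real.norm_eq_abs, abs_of_nonneg (mul_nonneg (abs_nonneg _) (abs_nonneg _))]
    exact h1
  have Isum : Integrable (fun x => (u x + v x) ^ 2) lam := by
    have : (fun x => (u x + v x) ^ 2)
        = fun x => Real.sin (a*x)^2 + 2 * (u x * v x) + Real.sin (b*x)^2 := by
      funext x
      simp only [hu, hv]
      rw [← sq_abs (Real.sin (a*x)), ← sq_abs (Real.sin (b*x))]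
      ring
    rw [this]
    exact (Ia.add (Iuv.const_mul 2)).add Ib
  -- pointwise inequality
  have hpt : ∀ x, Real.sin (c * x) ^ 2 ≤ (u x + v x) ^ 2 := by
    intro x
    have h1 : |Real.sin (c * x)| ≤ u x + v x := by
      rw [hc, add_mul, Real.sin_add]
      refine (abs_add_le _ _).trans ?_
      rw [abs_mul, abs_mul]
      simp only [hu, hv]
      nlinarith [abs_cos_le_one (a*x), abs_cos_le_one (b*x), abs_nonneg (Real.sin (a*x)),
        abs_nonneg (Real.sin (b*x))]
    calc Real.sin (c * x) ^ 2 = |Real.sin (c * x)| ^ 2 := (sq_abs _).symm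
      _ ≤ (u x + v x) ^ 2 := by
          nlinarith [abs_nonneg (Real.sin (c*x)), abs_nonneg (Real.sin (a*x)),
            abs_nonneg (Real.sin (b*x))]
  -- find a good point in the support
  obtain ⟨x₀, hx₀s, hx₀a, hx₀b⟩ : ∃ x₀, x₀ ∈ measureSupport lam ∧
      Real.sin (a * x₀) ≠ 0 ∧ Real.sin (b * x₀) ≠ 0 := by
    by_contra hcon
    push_neg at hcon
    have hsub : measureSupport lam ⊆
        (Set.range fun k : ℤ => (k : ℝ) * π / a) ∪ (Set.range fun k : ℤ => (k : ℝ) * π / b) := by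
      intro x hx
      rcases Classical.em (Real.sin (a * x) = 0) with h | h
      · obtain ⟨n, hn⟩ := Real.sin_eq_zero_iff.1 h
        exact Or.inl ⟨n, by field_simp [hn]; exact hn⟩
      · have hb0 := hcon x hx h
        obtain ⟨n, hn⟩ := Real.sin_eq_zero_iff.1 hb0
        exact Or.inr ⟨n, by field_simp [hn]; exact hn⟩
    exact hunc (((Set.countable_range _).union (Set.countable_range _)).mono hsub)
  -- strict pointwise inequality at x₀
  have hstrict : Real.sin (c * x₀) ^ 2 < (u x₀ + v x₀) ^ 2 := by
    have hca : |Real.cos (a * x₀)| < 1 := by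
      have h1 : Real.cos (a*x₀) ^ 2 < 1 := by
        nlinarith [Real.sin_sq_add_cos_sq (a*x₀), lt_of_le_of_ne (sq_nonneg _) (Ne.symm (pow_ne_zero 2 hx₀a))]
      exact (sq_lt_one_iff_abs_lt_one _).1 h1
    have hcb : |Real.cos (b * x₀)| < 1 := by
      have h1 : Real.cos (b*x₀) ^ 2 < 1 := by
        nlinarith [Real.sin_sq_add_cos_sq (b*x₀), lt_of_le_of_ne (sq_nonneg _) (Ne.symm (pow_ne_zero 2 hx₀b))]
      exact (sq_lt_one_iff_abs_lt_one _).1 h1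
    have hua : 0 < u x₀ := abs_pos.2 hx₀a
    have hvb : 0 < v x₀ := abs_pos.2 hx₀b
    have h1 : |Real.sin (c * x₀)| < u x₀ + v x₀ := by
      rw [hc, add_mul, Real.sin_add]
      refine (abs_add_le _ _).trans_lt ?_
      rw [abs_mul, abs_mul]
      simp only [hu, hv] at *
      nlinarith [abs_cos_le_one (a*x₀), abs_cos_le_one (b*x₀)]
    calc Real.sin (c * x₀) ^ 2 = |Real.sin (c * x₀)| ^ 2 := (sq_abs _).symm
      _ < (u x₀ + v x₀) ^ 2 := by nlinarith [abs_nonneg (Real.sin (c*x₀))]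
  -- positivity of the defect integral
  set h : ℝ → ℝ := fun x => (u x + v x) ^ 2 - Real.sin (c * x) ^ 2 with hh
  have hh_cont : Continuous h := ((hu_cont.add hv_cont).pow 2).sub
    ((Real.continuous_sin.comp (continuous_const.mul continuous_id)).pow 2)
  have hh_nonneg : ∀ x, 0 ≤ h x := fun x => sub_nonneg.2 (hpt x)
  have hh_int : Integrable h lam := Isum.sub Ic
  have hpos : 0 < ∫ x, h x ∂lam := by
    rw [integral_pos_iff_support_of_nonneg hh_nonneg hh_int]
    have hopen : IsOpen {x : ℝ | 0 < h x} := isOpen_lt continuous_const hh_cont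
    have hmem : x₀ ∈ {x : ℝ | 0 < h x} := sub_pos.2 hstrict
    have hne : lam {x : ℝ | 0 < h x} ≠ 0 := hx₀s _ hopen hmem
    have hsub : {x : ℝ | 0 < h x} ⊆ Function.support h := fun x hx => ne_of_gt hx
    calc (0:ENNReal) < lam {x : ℝ | 0 < h x} := pos_iff_ne_zero.2 hne
      _ ≤ lam (Function.support h) := measure_mono hsub
  have hlt : ∫ x, Real.sin (c * x) ^ 2 ∂lam < ∫ x, (u x + v x) ^ 2 ∂lam := by
    have := integral_sub Isum Ic
    have h2 : ∫ x, h x ∂lam = (∫ x, (u x + v x)^2 ∂lam) - ∫ x, Real.sin (c*x)^2 ∂lam := this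
    linarith [hpos, h2 ▸ hpos]
  -- Cauchy-Schwarz
  have hu_sq : ∫ x, u x ^ 2 ∂lam = ∫ x, Real.sin (a * x) ^ 2 ∂lam := by
    refine integral_congr_ae (Filter.Eventually.of_forall fun x => ?_)
    simp [hu, sq_abs]
  have hv_sq : ∫ x, v x ^ 2 ∂lam = ∫ x, Real.sin (b * x) ^ 2 ∂lam := by
    refine integral_congr_ae (Filter.Eventually.of_forall fun x => ?_)
    simp [hv, sq_abs]
  have Iu2 : Integrable (fun x => u x ^ 2) lam := by
    refine Ia.congr (Filter.Eventually.of_forall fun x => ?_)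
    simp [hu, sq_abs]
  have Iv2 : Integrable (fun x => v x ^ 2) lam := by
    refine Ib.congr (Filter.Eventually.of_forall fun x => ?_)
    simp [hv, sq_abs]
  have hCS : ∫ x, u x * v x ∂lam
      ≤ Real.sqrt (∫ x, u x ^ 2 ∂lam) * Real.sqrt (∫ x, v x ^ 2 ∂lam) := by
    have hpq : Real.HolderConjugate 2 2 := ⟨by norm_num, by norm_num, by norm_num⟩
    have hmu : MemLp u (ENNReal.ofReal 2) lam := by
      rw [show ENNReal.ofReal 2 = 2 by norm_num]
      exact (memLp_two_iff_integrable_sq hu_cont.aestronglyMeasurable).2 Iu2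
    have hmv : MemLp v (ENNReal.ofReal 2) lam := by
      rw [show ENNReal.ofReal 2 = 2 by norm_num]
      exact (memLp_two_iff_integrable_sq hv_cont.aestronglyMeasurable).2 Iv2
    have := integral_mul_le_Lp_mul_Lq_of_nonneg hpq
      (Filter.Eventually.of_forall fun x => abs_nonneg _)
      (Filter.Eventually.of_forall fun x => abs_nonneg _) hmu hmv
    have hrw : ∀ w : ℝ → ℝ, (∫ x, w x ^ (2:ℝ) ∂lam) = ∫ x, w x ^ 2 ∂lam := by
      intro w
      refine integral_congr_ae (Filter.Eventually.of_forall fun x => ?_)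
      show w x ^ (2:ℝ) = w x ^ 2
      rw [show (2:ℝ) = ((2:ℕ):ℝ) by norm_num, Real.rpow_natCast]
    rw [hrw u, hrw v] at this
    rw [Real.sqrt_eq_rpow, Real.sqrt_eq_rpow]
    exact this
  have hInt_u2_nonneg : 0 ≤ ∫ x, u x ^ 2 ∂lam := integral_nonneg fun x => sq_nonneg _
  have hInt_v2_nonneg : 0 ≤ ∫ x, v x ^ 2 ∂lam := integral_nonneg fun x => sq_nonneg _
  have hexp : ∫ x, (u x + v x) ^ 2 ∂lam
      ≤ (Real.sqrt (∫ x, u x ^ 2 ∂lam) + Real.sqrt (∫ x, v x ^ 2 ∂lam)) ^ 2 := by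
    have hsplit : ∫ x, (u x + v x) ^ 2 ∂lam
        = (∫ x, u x ^ 2 ∂lam) + 2 * (∫ x, u x * v x ∂lam) + ∫ x, v x ^ 2 ∂lam := by
      have heq : (fun x => (u x + v x) ^ 2)
          = fun x => u x ^ 2 + 2 * (u x * v x) + v x ^ 2 := by
        funext x; ring
      have I2uv : Integrable (fun x => 2 * (u x * v x)) lam := Iuv.const_mul 2
      have I12 : Integrable (fun x => u x ^ 2 + 2 * (u x * v x)) lam := Iu2.add I2uv
      rw [heq, integral_add I12 Iv2, integral_add Iu2 I2uv, integral_const_mul]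
    rw [hsplit]
    have h1 := Real.sq_sqrt hInt_u2_nonneg
    have h2 := Real.sq_sqrt hInt_v2_nonneg
    nlinarith [hCS]
  -- conclude
  have hfinal : ∫ x, Real.sin (c * x) ^ 2 ∂lam
      < (Real.sqrt (∫ x, Real.sin (a * x) ^ 2 ∂lam)
          + Real.sqrt (∫ x, Real.sin (b * x) ^ 2 ∂lam)) ^ 2 := by
    rw [← hu_sq, ← hv_sq]
    exact hlt.trans_le hexp
  have hsum_nonneg : 0 ≤ Real.sqrt (∫ x, Real.sin (a * x) ^ 2 ∂lam)
      + Real.sqrt (∫ x, Real.sin (b * x) ^ 2 ∂lam) :=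
    add_nonneg (Real.sqrt_nonneg _) (Real.sqrt_nonneg _)
  calc Real.sqrt (∫ x, Real.sin (c * x) ^ 2 ∂lam)
      < Real.sqrt ((Real.sqrt (∫ x, Real.sin (a * x) ^ 2 ∂lam)
          + Real.sqrt (∫ x, Real.sin (b * x) ^ 2 ∂lam)) ^ 2) :=
        Real.sqrt_lt_sqrt (integral_nonneg fun x => sq_nonneg _) hfinal
    _ = _ := Real.sqrt_sq hsum_nonneg

/-- **Strict triangle inequalities for an admissible cost function.** Let `λ`
be a Borel measure on `ℝ` with uncountable support and `∫ min(x², 1) dλ < ∞`,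
and set `f(t) = (∫ sin²(tx) dλ(x))^{1/2}`.  For nonzero reals `m₁, m₂` with
`m₁ + m₂ ≠ 0`, the numbers `f(|m₁|), f(|m₂|), f(|m₁ + m₂|)` are the side
lengths of a nondegenerate triangle. -/
theorem admissible_cost_strict_triangle
    (lam : Measure ℝ)
    (hunc : ¬ (measureSupport lam).Countable)
    (hint : Integrable (fun x : ℝ => min (x ^ 2) 1) lam)
    (m₁ m₂ : ℝ) (h₁ : m₁ ≠ 0) (h₂ : m₂ ≠ 0) (h₁₂ : m₁ + m₂ ≠ 0) :
    Real.sqrt (∫ x, Real.sin (|m₁ + m₂| * x) ^ 2 ∂lam)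
        < Real.sqrt (∫ x, Real.sin (|m₁| * x) ^ 2 ∂lam)
          + Real.sqrt (∫ x, Real.sin (|m₂| * x) ^ 2 ∂lam) ∧
      Real.sqrt (∫ x, Real.sin (|m₁| * x) ^ 2 ∂lam)
        < Real.sqrt (∫ x, Real.sin (|m₂| * x) ^ 2 ∂lam)
          + Real.sqrt (∫ x, Real.sin (|m₁ + m₂| * x) ^ 2 ∂lam) ∧
      Real.sqrt (∫ x, Real.sin (|m₂| * x) ^ 2 ∂lam)
        < Real.sqrt (∫ x, Real.sin (|m₁| * x) ^ 2 ∂lam)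
          + Real.sqrt (∫ x, Real.sin (|m₁ + m₂| * x) ^ 2 ∂lam) := by
  have habs : ∀ m x : ℝ, Real.sin (|m| * x) ^ 2 = Real.sin (m * x) ^ 2 := by
    intro m x
    rcases abs_cases m with ⟨h, _⟩ | ⟨h, _⟩ <;> rw [h] <;> simp [neg_mul, Real.sin_neg]
  simp only [habs]
  have hneg : ∀ m : ℝ, (∫ x, Real.sin (-m * x) ^ 2 ∂lam) = ∫ x, Real.sin (m * x) ^ 2 ∂lam := by
    intro m
    refine integral_congr_ae (Filter.Eventually.of_forall fun x => ?_)
    simp [neg_mul, Real.sin_neg]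
  refine ⟨key_lemma lam hunc hint m₁ m₂ (m₁+m₂) h₁ h₂ rfl, ?_, ?_⟩
  · have := key_lemma lam hunc hint (m₁+m₂) (-m₂) m₁ h₁₂ (neg_ne_zero.2 h₂) (by ring)
    rwa [hneg m₂, add_comm] at this
  · have := key_lemma lam hunc hint (m₁+m₂) (-m₁) m₂ h₁₂ (neg_ne_zero.2 h₁) (by ring)
    rwa [hneg m₁, add_comm] at this
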